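/- arXiv:1203.5422 — 3 statements merged into one kernel-verified Lean document; each statement's English description precedes it below -/
import Mathlib

section
/- If random variables (σ_1, ..., σ_{n+1}) are exchangeable, then for any α ∈ (0,1), the probability that the rank statistic π = (1/(n+1)) · #{j : σ_j ≤ σ_{n+1}} satisfies π ≥ ⌊(n+1)α⌋/(n+1) is at least 1 − α. -/
open MeasureTheory ENNReal

lemma card_le_aux {n : ℕ} (x : Fin (n+1) → ℝ) (m : ℕ) :
    (Finset.univ.filter (fun i => (Finset.univ.filter (fun j => x j ≤ x i)).card ≤ m)).card ≤ m := by
  set S := Finset.univ.filter (fun i => (Finset.univ.filter (fun j => x j ≤ x i)).card ≤ m) with hS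
  rcases S.eq_empty_or_nonempty with h | h
  · simp [h]
  · obtain ⟨i, hi, hmax⟩ := S.exists_max_image x h
    have hsub : S ⊆ Finset.univ.filter (fun j => x j ≤ x i) := by
      intro j hj
      exact Finset.mem_filter.mpr ⟨Finset.mem_univ _, hmax j hj⟩
    have := Finset.card_le_card hsub
    have hi' := (Finset.mem_filter.mp hi).2
    omega

lemma card_reindex {n : ℕ} (e : Equiv.Perm (Fin (n+1))) (p : Fin (n+1) → Prop) [DecidablePred p] :
    (Finset.univ.filter (fun j => p (e j))).card = (Finset.univ.filter p).card := by
  apply Finset.card_bij' (fun j _ => e j) (fun j _ => e.symm j) <;> simp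

/-- If `(σ_1, ..., σ_{n+1})` are exchangeable real random variables, then for any
`α ∈ (0,1)`, the normalized rank `π = (1/(n+1)) · #{j : σ_j ≤ σ_{n+1}}` satisfies
`P(π ≥ ⌊(n+1)α⌋/(n+1)) ≥ 1 − α`. -/
theorem rank_statistic_subuniform
    {Ω : Type*} [MeasurableSpace Ω] (P : Measure Ω) [IsProbabilityMeasure P]
    (n : ℕ) (σ : Fin (n + 1) → Ω → ℝ) (hmeas : ∀ i, Measurable (σ i))
    (hexch : ∀ e : Equiv.Perm (Fin (n + 1)),
      Measure.map (fun ω => fun i => σ (e i) ω) P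
        = Measure.map (fun ω => fun i => σ i ω) P)
    (α : ℝ) (hα : α ∈ Set.Ioo (0 : ℝ) 1) :
    ENNReal.ofReal (1 - α) ≤
      P {ω | ((⌊((n : ℝ) + 1) * α⌋ : ℝ) / ((n : ℝ) + 1)) ≤
        ((Finset.univ.filter (fun j : Fin (n + 1) => σ j ω ≤ σ (Fin.last n) ω)).card : ℝ)
          / ((n : ℝ) + 1)} := by
  obtain ⟨hα0, hα1⟩ := hα
  have hnpos : (0:ℝ) < (n:ℝ)+1 := by positivity
  set R : Fin (n+1) → Ω → ℕ := fun i ω => (Finset.univ.filter (fun j => σ j ω ≤ σ i ω)).card with hRdef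
  set k : ℕ := (⌊((n:ℝ)+1)*α⌋).toNat with hkdef
  have hfloor_nonneg : (0:ℤ) ≤ ⌊((n:ℝ)+1)*α⌋ := by
    apply Int.floor_nonneg.mpr; positivity
  have hk_le : (k:ℝ) ≤ ((n:ℝ)+1)*α := by
    have h1 : ((k:ℤ):ℝ) = ((⌊((n:ℝ)+1)*α⌋ : ℤ):ℝ) := by
      rw [hkdef, Int.toNat_of_nonneg hfloor_nonneg]
    calc (k:ℝ) = ((⌊((n:ℝ)+1)*α⌋ : ℤ):ℝ) := by exact_mod_cast h1
      _ ≤ ((n:ℝ)+1)*α := Int.floor_le _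
  -- rewrite the event
  have hevent : {ω | ((⌊((n : ℝ) + 1) * α⌋ : ℝ) / ((n : ℝ) + 1)) ≤
        ((Finset.univ.filter (fun j : Fin (n + 1) => σ j ω ≤ σ (Fin.last n) ω)).card : ℝ)
          / ((n : ℝ) + 1)} = {ω | k ≤ R (Fin.last n) ω} := by
    ext ω
    simp only [Set.mem_setOf_eq, hRdef]
    rw [div_le_div_iff_of_pos_right hnpos]
    constructor
    · intro h
      have : (⌊((n:ℝ)+1)*α⌋ : ℤ) ≤ ((Finset.univ.filter (fun j : Fin (n + 1) => σ j ω ≤ σ (Fin.last n) ω)).card : ℤ) := by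
        exact_mod_cast h
      exact Int.toNat_le.mpr this
    · intro h
      have : (⌊((n:ℝ)+1)*α⌋ : ℤ) ≤ ((Finset.univ.filter (fun j : Fin (n + 1) => σ j ω ≤ σ (Fin.last n) ω)).card : ℤ) := Int.toNat_le.mp h
      exact_mod_cast this
  rw [hevent]
  -- measurability
  have hmeasR : ∀ i, Measurable (R i) := by
    intro i
    have h : R i = fun ω => ∑ j, if σ j ω ≤ σ i ω then 1 else 0 :=
      funext fun ω => Finset.card_filter _ _
    rw [h]
    exact Finset.measurable_sum _ (fun j _ =>
      Measurable.ite (measurableSet_le (hmeas j) (hmeas i)) measurable_const measurable_const)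
  have hA : ∀ i (m : ℕ), MeasurableSet {ω | R i ω ≤ m} := by
    intro i m
    have h : {ω | R i ω ≤ m} = R i ⁻¹' {t | t ≤ m} := rfl
    rw [h]
    exact hmeasR i (by trivial)
  -- B set in function space
  have hBmeas : ∀ m : ℕ, MeasurableSet {x : Fin (n+1) → ℝ |
      (Finset.univ.filter (fun j => x j ≤ x (Fin.last n))).card ≤ m} := by
    intro m
    have h : Measurable (fun x : Fin (n+1) → ℝ =>
        (Finset.univ.filter (fun j => x j ≤ x (Fin.last n))).card) := by
      have h2 : (fun x : Fin (n+1) → ℝ => (Finset.univ.filter (fun j => x j ≤ x (Fin.last n))).card)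
          = fun x => ∑ j, if x j ≤ x (Fin.last n) then 1 else 0 :=
        funext fun x => Finset.card_filter _ _
      rw [h2]
      exact Finset.measurable_sum _ (fun j _ =>
        Measurable.ite (measurableSet_le (measurable_pi_apply j) (measurable_pi_apply _))
          measurable_const measurable_const)
    have heq : {x : Fin (n+1) → ℝ | (Finset.univ.filter (fun j => x j ≤ x (Fin.last n))).card ≤ m}
        = (fun x : Fin (n+1) → ℝ => (Finset.univ.filter (fun j => x j ≤ x (Fin.last n))).card) ⁻¹' {t | t ≤ m} := rfl
    rw [heq]
    exact h (by trivial)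
  -- exchangeability: all ranks have the same law
  have hAeq : ∀ (m : ℕ) (i : Fin (n+1)), P {ω | R i ω ≤ m} = P {ω | R (Fin.last n) ω ≤ m} := by
    intro m i
    set e := Equiv.swap (Fin.last n) i with he
    have h1 : Measurable (fun ω => fun j => σ (e j) ω) :=
      measurable_pi_lambda _ (fun j => hmeas _)
    have h2 : Measurable (fun ω => fun j => σ j ω) :=
      measurable_pi_lambda _ (fun j => hmeas _)
    set B : Set (Fin (n+1) → ℝ) := {x | (Finset.univ.filter (fun j => x j ≤ x (Fin.last n))).card ≤ m} with hB
    have hpre1 : (fun ω => fun j => σ (e j) ω) ⁻¹' B = {ω | R i ω ≤ m} := by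
      ext ω
      simp only [Set.mem_preimage, hB, Set.mem_setOf_eq, hRdef]
      have helast : e (Fin.last n) = i := Equiv.swap_apply_left _ _
      simp only [helast]
      rw [card_reindex e (fun j => σ j ω ≤ σ i ω)]
    have hpre2 : (fun ω => fun j => σ j ω) ⁻¹' B = {ω | R (Fin.last n) ω ≤ m} := by
      ext ω
      simp only [Set.mem_preimage, hB, Set.mem_setOf_eq, hRdef]
    calc P {ω | R i ω ≤ m} = P ((fun ω => fun j => σ (e j) ω) ⁻¹' B) := by rw [hpre1]
      _ = Measure.map (fun ω => fun j => σ (e j) ω) P B := (Measure.map_apply h1 (hBmeas m)).symm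
      _ = Measure.map (fun ω => fun j => σ j ω) P B := by rw [hexch e]
      _ = P ((fun ω => fun j => σ j ω) ⁻¹' B) := Measure.map_apply h2 (hBmeas m)
      _ = P {ω | R (Fin.last n) ω ≤ m} := by rw [hpre2]
  -- the sum bound
  have hkey : ∀ m : ℕ, ((n:ℝ≥0∞)+1) * P {ω | R (Fin.last n) ω ≤ m} ≤ (m:ℝ≥0∞) := by
    intro m
    have hsum : ∑ i : Fin (n+1), P {ω | R i ω ≤ m} ≤ (m:ℝ≥0∞) := by
      have h1 : ∀ i : Fin (n+1), P {ω | R i ω ≤ m}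
          = ∫⁻ ω, Set.indicator {ω' | R i ω' ≤ m} (fun _ => (1:ℝ≥0∞)) ω ∂P := by
        intro i
        exact (lintegral_indicator_one (hA i m)).symm
      calc ∑ i : Fin (n+1), P {ω | R i ω ≤ m}
          = ∑ i : Fin (n+1), ∫⁻ ω, Set.indicator {ω' | R i ω' ≤ m} (fun _ => (1:ℝ≥0∞)) ω ∂P :=
            Finset.sum_congr rfl (fun i _ => h1 i)
        _ = ∫⁻ ω, ∑ i : Fin (n+1), Set.indicator {ω' | R i ω' ≤ m} (fun _ => (1:ℝ≥0∞)) ω ∂P := by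
            rw [lintegral_finset_sum]
            intro i _
            exact (measurable_const.indicator (hA i m))
        _ ≤ ∫⁻ _, (m:ℝ≥0∞) ∂P := by
            apply lintegral_mono
            intro ω
            have hcard := card_le_aux (fun j => σ j ω) m
            calc ∑ i : Fin (n+1), Set.indicator {ω' | R i ω' ≤ m} (fun _ => (1:ℝ≥0∞)) ω
                = ∑ i : Fin (n+1), if R i ω ≤ m then (1:ℝ≥0∞) else 0 := by
                  apply Finset.sum_congr rfl
                  intro i _
                  rw [Set.indicator_apply]
                  rfl
              _ = ((Finset.univ.filter (fun i => R i ω ≤ m)).card : ℝ≥0∞) := by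
                  rw [Finset.card_filter]
                  push_cast
                  rfl
              _ ≤ (m:ℝ≥0∞) := by exact_mod_cast hcard
        _ = (m:ℝ≥0∞) := by simp
    calc ((n:ℝ≥0∞)+1) * P {ω | R (Fin.last n) ω ≤ m}
        = ∑ _i : Fin (n+1), P {ω | R (Fin.last n) ω ≤ m} := by
          rw [Finset.sum_const, Finset.card_univ, Fintype.card_fin]
          rw [nsmul_eq_mul]
          push_cast
          ring
      _ = ∑ i : Fin (n+1), P {ω | R i ω ≤ m} := Finset.sum_congr rfl (fun i _ => (hAeq m i).symm)
      _ ≤ (m:ℝ≥0∞) := hsum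
  -- conclude
  rcases Nat.eq_zero_or_pos k with hk0 | hkpos
  · have : {ω | k ≤ R (Fin.last n) ω} = Set.univ := by
      ext ω; simp [hk0]
    rw [this, measure_univ]
    exact ENNReal.ofReal_le_one.mpr (by linarith)
  · obtain ⟨m, hm⟩ : ∃ m, k = m + 1 := ⟨k - 1, by omega⟩
    rw [hm]
    have hk_le' : ((m:ℝ)+1) ≤ ((n:ℝ)+1)*α := by
      rw [hm] at hk_le; push_cast at hk_le; linarith
    have hcompl : {ω | m + 1 ≤ R (Fin.last n) ω}ᶜ = {ω | R (Fin.last n) ω ≤ m} := by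
      ext ω; simp [Nat.lt_succ_iff, Nat.not_le, Nat.lt_succ_iff]
    have hPcompl : P {ω | R (Fin.last n) ω ≤ m} ≤ ENNReal.ofReal α := by
      have hN0 : ((n:ℝ≥0∞)+1) ≠ 0 := ne_of_gt (lt_of_lt_of_le zero_lt_one le_add_self)
      have hNtop : ((n:ℝ≥0∞)+1) ≠ ⊤ := by
        simp [ENNReal.add_ne_top]
      have hm : (m:ℝ≥0∞) ≤ ((n:ℝ≥0∞)+1) * ENNReal.ofReal α := by
        have hreal : (m:ℝ) ≤ ((n:ℝ)+1) * α := by linarith [hk_le']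
        calc (m:ℝ≥0∞) = ENNReal.ofReal (m:ℝ) := by
              rw [ENNReal.ofReal_natCast]
          _ ≤ ENNReal.ofReal (((n:ℝ)+1)*α) := ENNReal.ofReal_le_ofReal hreal
          _ = ENNReal.ofReal ((n:ℝ)+1) * ENNReal.ofReal α := ENNReal.ofReal_mul (by positivity)
          _ = ((n:ℝ≥0∞)+1) * ENNReal.ofReal α := by
              rw [ENNReal.ofReal_add (by positivity) zero_le_one, ENNReal.ofReal_natCast,
                ENNReal.ofReal_one]
      have h := le_trans (hkey m) hm
      exact (ENNReal.mul_le_mul_iff_right hN0 hNtop).mp h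
    have hE : MeasurableSet {ω | m + 1 ≤ R (Fin.last n) ω} := by
      have := (hA (Fin.last n) m).compl
      rwa [← hcompl, compl_compl] at this
    have h1 : P {ω | m + 1 ≤ R (Fin.last n) ω}ᶜ = 1 - P {ω | m + 1 ≤ R (Fin.last n) ω} := by
      rw [measure_compl hE (measure_ne_top P _), measure_univ]
    have hPE : P {ω | m + 1 ≤ R (Fin.last n) ω}
        = 1 - P {ω | R (Fin.last n) ω ≤ m} := by
      rw [← hcompl, h1, ENNReal.sub_sub_cancel ENNReal.one_ne_top prob_le_one]
    rw [hPE]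
    have hofReal : ENNReal.ofReal (1 - α) = 1 - ENNReal.ofReal α := by
      rw [ENNReal.ofReal_sub _ hα0.le, ENNReal.ofReal_one]
    rw [hofReal]
    exact tsub_le_tsub_left hPcompl 1
end

section
/- If the total variation distance between probability measures P and Q is at most ε_n = 2[1 − (1 − ε²/8)^{1/n}], then the total variation distance between the n-fold product measures P^n and Q^n is at most ε. -/
open MeasureTheory

lemma abs_lintegral_sub_le_aux {α : Type*} [MeasurableSpace α] (μ : Measure α)
    [IsProbabilityMeasure μ] (f g : α → ENNReal)
    (hf : Measurable f) (hg : Measurable g)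
    (hf1 : ∀ x, f x ≤ 1) (hg1 : ∀ x, g x ≤ 1)
    (c : ℝ) (hc : 0 ≤ c)
    (h : ∀ x, |(f x).toReal - (g x).toReal| ≤ c) :
    |(∫⁻ x, f x ∂μ).toReal - (∫⁻ x, g x ∂μ).toReal| ≤ c := by
  have hfin : ∀ (k : α → ENNReal), (∀ x, k x ≤ 1) → (∫⁻ x, k x ∂μ) ≤ 1 := by
    intro k hk
    calc ∫⁻ x, k x ∂μ ≤ ∫⁻ _, 1 ∂μ := lintegral_mono hk
    _ = 1 := by simp
  have hfI := hfin f hf1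
  have hgI := hfin g hg1
  have key : ∀ (u v : α → ENNReal), Measurable u → Measurable v →
      (∀ x, u x ≤ 1) → (∀ x, v x ≤ 1) →
      (∀ x, (u x).toReal ≤ c + (v x).toReal) →
      (∫⁻ x, u x ∂μ).toReal ≤ c + (∫⁻ x, v x ∂μ).toReal := by
    intro u v hu hv hu1 hv1 hle
    have hpt : ∀ x, u x ≤ ENNReal.ofReal c + v x := by
      intro x
      have hux : u x = ENNReal.ofReal (u x).toReal :=
        (ENNReal.ofReal_toReal (ne_top_of_le_ne_top (by simp) (hu1 x))).symm
      have hvx : v x = ENNReal.ofReal (v x).toReal :=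
        (ENNReal.ofReal_toReal (ne_top_of_le_ne_top (by simp) (hv1 x))).symm
      rw [hux, hvx, ← ENNReal.ofReal_add hc ENNReal.toReal_nonneg]
      exact ENNReal.ofReal_le_ofReal (hle x)
    have : (∫⁻ x, u x ∂μ) ≤ ENNReal.ofReal c + ∫⁻ x, v x ∂μ := by
      calc (∫⁻ x, u x ∂μ) ≤ ∫⁻ x, (ENNReal.ofReal c + v x) ∂μ := lintegral_mono hpt
      _ = ENNReal.ofReal c + ∫⁻ x, v x ∂μ := by
          rw [lintegral_add_left measurable_const, lintegral_const]
          simp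
    have hIu : (∫⁻ x, u x ∂μ) ≠ ⊤ := ne_top_of_le_ne_top (by simp) (hfin u hu1)
    have hIv : (∫⁻ x, v x ∂μ) ≠ ⊤ := ne_top_of_le_ne_top (by simp) (hfin v hv1)
    have := ENNReal.toReal_mono (by simp [hIv, ENNReal.add_ne_top]) this
    rwa [ENNReal.toReal_add (by simp) hIv, ENNReal.toReal_ofReal hc] at this
  rw [abs_sub_le_iff]
  constructor
  · have := key f g hf hg hf1 hg1 (fun x => by
      have := (abs_sub_le_iff.mp (h x)).1; linarith)
    linarith
  · have := key g f hg hf hg1 hf1 (fun x => by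
      have := (abs_sub_le_iff.mp (h x)).2; linarith)
    linarith

lemma tv_pi_le {X : Type*} [MeasurableSpace X] (δ : ℝ) (hδ : 0 ≤ δ) :
    ∀ (n : ℕ) (P Q : Measure X), IsProbabilityMeasure P → IsProbabilityMeasure Q →
    (∀ A : Set X, MeasurableSet A → |(P A).toReal - (Q A).toReal| ≤ δ) →
    ∀ B : Set (Fin n → X), MeasurableSet B →
      |((Measure.pi fun _ : Fin n => P) B).toReal -
        ((Measure.pi fun _ : Fin n => Q) B).toReal| ≤ n * δ := by
  intro n
  induction n with
  | zero =>
      intro P Q hP hQ hPQ B hB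
      have : (Measure.pi fun _ : Fin 0 => P) = (Measure.pi fun _ : Fin 0 => Q) := by
        rw [Measure.pi_of_empty, Measure.pi_of_empty]
      simp [this]
  | succ n ih =>
      intro P Q hP hQ hPQ B hB
      set e := MeasurableEquiv.piFinSuccAbove (fun _ : Fin (n + 1) => X) 0 with he
      have hmpP := measurePreserving_piFinSuccAbove (fun _ : Fin (n + 1) => P) 0
      have hmpQ := measurePreserving_piFinSuccAbove (fun _ : Fin (n + 1) => Q) 0
      set Pn := Measure.pi fun _ : Fin n => P with hPn
      set Qn := Measure.pi fun _ : Fin n => Q with hQn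
      haveI : IsProbabilityMeasure Pn := by exact Measure.pi.instIsProbabilityMeasure _
      haveI : IsProbabilityMeasure Qn := by exact Measure.pi.instIsProbabilityMeasure _
      set C : Set (X × (Fin n → X)) := e.symm ⁻¹' B with hC
      have hCm : MeasurableSet C := e.symm.measurable hB
      have hPB : (Measure.pi fun _ : Fin (n + 1) => P) B = (P.prod Pn) C := by
        rw [← hmpP.map_eq, MeasurableEquiv.map_apply]
        congr 1
        rw [hC, ← Set.preimage_comp, MeasurableEquiv.symm_comp_self, Set.preimage_id]
      have hQB : (Measure.pi fun _ : Fin (n + 1) => Q) B = (Q.prod Qn) C := by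
        rw [← hmpQ.map_eq, MeasurableEquiv.map_apply]
        congr 1
        rw [hC, ← Set.preimage_comp, MeasurableEquiv.symm_comp_self, Set.preimage_id]
      rw [hPB, hQB]
      -- triangle inequality through P.prod Qn
      have h1 : |((P.prod Pn) C).toReal - ((P.prod Qn) C).toReal| ≤ n * δ := by
        rw [Measure.prod_apply hCm, Measure.prod_apply hCm]
        refine abs_lintegral_sub_le_aux P _ _ (measurable_measure_prodMk_left hCm)
          (measurable_measure_prodMk_left hCm) (fun x => prob_le_one)
          (fun x => prob_le_one) _ (by positivity) ?_
        intro x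
        exact ih P Q hP hQ hPQ _ (measurable_prodMk_left hCm)
      have h2 : |((P.prod Qn) C).toReal - ((Q.prod Qn) C).toReal| ≤ δ := by
        rw [Measure.prod_apply_symm hCm, Measure.prod_apply_symm hCm]
        refine abs_lintegral_sub_le_aux Qn _ _ ?_ ?_ (fun y => prob_le_one)
          (fun y => prob_le_one) _ hδ ?_
        · exact measurable_measure_prodMk_right hCm
        · exact measurable_measure_prodMk_right hCm
        · intro y
          exact hPQ _ (measurable_prodMk_right hCm)
      calc |((P.prod Pn) C).toReal - ((Q.prod Qn) C).toReal|
          ≤ |((P.prod Pn) C).toReal - ((P.prod Qn) C).toReal| +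
            |((P.prod Qn) C).toReal - ((Q.prod Qn) C).toReal| := abs_sub_le _ _ _
        _ ≤ n * δ + δ := add_le_add h1 h2
        _ = ((n : ℝ) + 1) * δ := by ring
        _ = ((n + 1 : ℕ) : ℝ) * δ := by push_cast; ring

/-- If the total variation distance between probability measures `P` and `Q` is at most
`ε_n = 2[1 − (1 − ε²/8)^{1/n}]`, then the total variation distance between the `n`-fold
product measures `P^n` and `Q^n` is at most `ε`. -/
theorem tv_product_bound
    {X : Type*} [MeasurableSpace X]
    (P Q : Measure X) [IsProbabilityMeasure P] [IsProbabilityMeasure Q]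
    (n : ℕ) (hn : 1 ≤ n) (ε : ℝ) (hε : ε ∈ Set.Ioo (0 : ℝ) 1)
    (hTV : ∀ A : Set X, MeasurableSet A →
      |(P A).toReal - (Q A).toReal| ≤ 2 * (1 - (1 - ε ^ 2 / 8) ^ ((1 : ℝ) / n))) :
    ∀ B : Set (Fin n → X), MeasurableSet B →
      |((Measure.pi fun _ : Fin n => P) B).toReal -
        ((Measure.pi fun _ : Fin n => Q) B).toReal| ≤ ε := by
  obtain ⟨hε0, hε1⟩ := hε
  have hε2 : ε ^ 2 ≤ 1 := by nlinarith
  have hε2' : 0 ≤ ε ^ 2 := sq_nonneg ε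
  set y : ℝ := 1 - ε ^ 2 / 8 with hy
  have hy0 : (0 : ℝ) < y := by rw [hy]; linarith
  have hy1 : y ≤ 1 := by rw [hy]; linarith
  have hy78 : (7 : ℝ) / 8 ≤ y := by rw [hy]; linarith
  have hnR : (0 : ℝ) < n := by exact_mod_cast hn
  set z : ℝ := y ^ ((1 : ℝ) / n) with hz
  have hz0 : 0 < z := Real.rpow_pos_of_pos hy0 _
  have hz1 : z ≤ 1 := Real.rpow_le_one (le_of_lt hy0) hy1 (by positivity)
  set δ : ℝ := 2 * (1 - z) with hδdef
  have hδ0 : 0 ≤ δ := by nlinarith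
  have key := tv_pi_le δ hδ0 n P Q inferInstance inferInstance hTV
  intro B hB
  refine le_trans (key B hB) ?_
  -- show n * δ ≤ ε
  have hlogz : Real.log z = (1 / n) * Real.log y := Real.log_rpow hy0 _
  have h1 : 1 - z ≤ - Real.log z := by
    have := Real.log_le_sub_one_of_pos hz0
    linarith
  have h2 : - Real.log y ≤ (1 - y) / y := by
    have := Real.log_le_sub_one_of_pos (show (0:ℝ) < 1/y by positivity)
    rw [Real.log_div one_ne_zero (ne_of_gt hy0), Real.log_one] at this
    have heq : (1 - y) / y = 1 / y - 1 := by field_simp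
    rw [heq]
    linarith
  have h3 : (1 - y) / y ≤ ε ^ 2 / 7 := by
    rw [div_le_div_iff₀ hy0 (by norm_num)]
    have : 1 - y = ε ^ 2 / 8 := by rw [hy]; ring
    rw [this]
    nlinarith
  have h4 : (n : ℝ) * δ ≤ 2 * ((- Real.log y)) := by
    have : (n : ℝ) * (1 - z) ≤ (n : ℝ) * (- Real.log z) :=
      mul_le_mul_of_nonneg_left h1 (le_of_lt hnR)
    rw [hlogz] at this
    have heq : (n : ℝ) * -(1 / n * Real.log y) = - Real.log y := by
      field_simp
    rw [heq] at this
    rw [hδdef]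
    linarith
  have : (n : ℝ) * δ ≤ 2 * (ε ^ 2 / 7) := by linarith
  nlinarith
end

section
/- If p is a density in the Hölder class Σ(β, L) on ℝ and K is a valid kernel of order β with ∫|u|^β |K(u)| du < ∞, then the convolution bias satisfies ‖p − p ⋆ K_h‖_∞ ≤ (L/⌊β⌋!) h^β ∫ |u|^β |K(u)| du, where K_h(x) = h^{−1} K(x/h). -/
open MeasureTheory Finset

lemma myIDW_eq {n m : ℕ} {f : ℝ → ℝ} (hf : ContDiff ℝ (n : ℕ∞) f) (hmn : m ≤ n)
    {s : Set ℝ} (hs : UniqueDiffOn ℝ s) {x : ℝ} (hx : x ∈ s) :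
    iteratedDerivWithin m f s x = iteratedDeriv m f x := by
  have h1 : HasFTaylorSeriesUpToOn (n : ℕ∞) f (ftaylorSeries ℝ f) s :=
    (contDiff_iff_ftaylorSeries.mp hf).hasFTaylorSeriesUpToOn s
  have h2 := h1.eq_iteratedFDerivWithin_of_uniqueDiffOn (m := m) (by exact_mod_cast hmn) hs hx
  rw [iteratedDerivWithin_eq_iteratedFDerivWithin, iteratedDeriv_eq_iteratedFDeriv, ← h2]
  rfl

/-- One-sided Taylor–Hölder remainder bound. -/
lemma taylor_holder_lt (ℓ : ℕ) (β L : ℝ) (hβℓ : (ℓ : ℝ) ≤ β)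
    (hL : 0 ≤ L) (p : ℝ → ℝ) (hp : ContDiff ℝ (ℓ : ℕ∞) p)
    (hHolder : ∀ x x' : ℝ,
      |iteratedDeriv ℓ p x - iteratedDeriv ℓ p x'| ≤ L * |x - x'| ^ (β - (ℓ : ℝ)))
    (x y : ℝ) (hxy : x < y) :
    |p y - ∑ k ∈ Finset.range (ℓ + 1), iteratedDeriv k p x * (y - x) ^ k / (Nat.factorial k : ℝ)| ≤
      L / ((Nat.factorial ℓ : ℝ) : ℝ) * |y - x| ^ β := by
  cases ℓ with
  | zero =>
    simpa using hHolder y x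
  | succ m =>
    set s : Set ℝ := Set.Icc x y with hsdef
    have hs : UniqueDiffOn ℝ s := uniqueDiffOn_Icc hxy
    have hfm : ContDiffOn ℝ m p s := (hp.of_le (by exact_mod_cast Nat.le_succ m)).contDiffOn
    have hdiff : Differentiable ℝ (iteratedDeriv m p) :=
      hp.differentiable_iteratedDeriv m (by exact_mod_cast Nat.lt_succ_self m)
    have hf' : DifferentiableOn ℝ (iteratedDerivWithin m p s) (Set.Ioo x y) :=
      (hdiff.differentiableOn).congr fun t ht =>
        myIDW_eq hp (Nat.le_succ m) hs (Set.Ioo_subset_Icc_self ht)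
    obtain ⟨ξ, hξ, hR⟩ := taylor_mean_remainder_lagrange hxy.ne (by rwa [Set.uIcc_of_le hxy.le])
      (by rwa [Set.uIcc_of_le hxy.le, Set.uIoo_of_le hxy.le])
    rw [Set.uIcc_of_le hxy.le, ← hsdef] at hR
    rw [Set.uIoo_of_le hxy.le] at hξ
    have hT : taylorWithinEval p m s x y =
        ∑ k ∈ Finset.range (m + 1), iteratedDeriv k p x * (y - x) ^ k / (Nat.factorial k : ℝ) := by
      rw [taylor_within_apply]
      refine Finset.sum_congr rfl fun k hk => ?_
      rw [myIDW_eq hp (Nat.lt_succ_iff.mp (Finset.mem_range.mp hk) |>.trans (Nat.le_succ m))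
        hs (Set.left_mem_Icc.mpr hxy.le)]
      simp only [smul_eq_mul]; ring
    have hξI : iteratedDerivWithin (m + 1) p s ξ = iteratedDeriv (m + 1) p ξ :=
      myIDW_eq hp le_rfl hs (Set.Ioo_subset_Icc_self hξ)
    have key : p y - ∑ k ∈ Finset.range (m + 2), iteratedDeriv k p x * (y - x) ^ k / (Nat.factorial k : ℝ) =
        (iteratedDeriv (m + 1) p ξ - iteratedDeriv (m + 1) p x) * (y - x) ^ (m + 1) / (Nat.factorial (m+1)) := by
      rw [Finset.sum_range_succ, ← hT]
      rw [hξI] at hR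
      rw [show p y - (taylorWithinEval p m s x y + iteratedDeriv (m+1) p x * (y - x) ^ (m+1) / (Nat.factorial (m+1)))
          = (p y - taylorWithinEval p m s x y) - iteratedDeriv (m+1) p x * (y - x) ^ (m+1) / (Nat.factorial (m+1)) by ring,
        hR]
      ring
    rw [key]
    have hw : (0:ℝ) < y - x := sub_pos.mpr hxy
    have hwa : |y - x| = y - x := abs_of_pos hw
    have hfac : (0:ℝ) < ((Nat.factorial (m+1)) : ℝ) := by positivity
    rw [abs_div, abs_mul, abs_pow, hwa, Nat.abs_cast]
    have h1 : |iteratedDeriv (m + 1) p ξ - iteratedDeriv (m + 1) p x| ≤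
        L * (y - x) ^ (β - ((m+1 : ℕ) : ℝ)) := by
      refine (hHolder ξ x).trans ?_
      refine mul_le_mul_of_nonneg_left ?_ hL
      refine Real.rpow_le_rpow (abs_nonneg _) ?_ (sub_nonneg.mpr hβℓ)
      rw [abs_of_pos (sub_pos.mpr hξ.1)]
      linarith [hξ.2]
    have h2 : |iteratedDeriv (m + 1) p ξ - iteratedDeriv (m + 1) p x| * (y - x) ^ (m + 1)
        ≤ (L * (y - x) ^ (β - ((m+1 : ℕ) : ℝ))) * (y - x) ^ (m + 1) :=
      mul_le_mul_of_nonneg_right h1 (pow_nonneg hw.le _)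
    have h3 : (y - x) ^ (β - ((m+1 : ℕ) : ℝ)) * (y - x) ^ ((m+1 : ℕ)) = (y - x) ^ β := by
      rw [← Real.rpow_natCast (y - x) (m+1), ← Real.rpow_add hw, sub_add_cancel]
    calc |iteratedDeriv (m + 1) p ξ - iteratedDeriv (m + 1) p x| * (y - x) ^ (m + 1) / ((Nat.factorial (m+1)) : ℝ)
        ≤ (L * (y - x) ^ (β - ((m+1 : ℕ) : ℝ))) * (y - x) ^ (m + 1) / ((Nat.factorial (m+1)) : ℝ) :=
          (div_le_div_iff_of_pos_right hfac).mpr h2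
      _ = L * ((y - x) ^ (β - ((m+1 : ℕ) : ℝ)) * (y - x) ^ ((m+1 : ℕ))) / ((Nat.factorial (m+1)) : ℝ) := by ring
      _ = L / ((Nat.factorial (m+1)) : ℝ) * (y - x) ^ β := by rw [h3]; ring

/-- Two-sided Taylor–Hölder remainder bound. -/
lemma taylor_holder (ℓ : ℕ) (β L : ℝ) (hβ : 0 < β) (hβℓ : (ℓ : ℝ) ≤ β)
    (hL : 0 ≤ L) (p : ℝ → ℝ) (hp : ContDiff ℝ (ℓ : ℕ∞) p)
    (hHolder : ∀ x x' : ℝ,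
      |iteratedDeriv ℓ p x - iteratedDeriv ℓ p x'| ≤ L * |x - x'| ^ (β - (ℓ : ℝ)))
    (x y : ℝ) :
    |p y - ∑ k ∈ Finset.range (ℓ + 1), iteratedDeriv k p x * (y - x) ^ k / (Nat.factorial k : ℝ)| ≤
      L / (Nat.factorial ℓ : ℝ) * |y - x| ^ β := by
  rcases lt_trichotomy x y with hxy | hxy | hxy
  · exact taylor_holder_lt ℓ β L hβℓ hL p hp hHolder x y hxy
  · subst hxy
    have hsum : ∑ k ∈ Finset.range (ℓ + 1), iteratedDeriv k p x * (x - x) ^ k / (Nat.factorial k : ℝ) = p x := by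
      rw [Finset.sum_eq_single_of_mem 0 (Finset.mem_range.mpr (Nat.succ_pos ℓ))]
      · simp
      · intro k _ hk0
        simp [zero_pow hk0]
    rw [hsum, sub_self, abs_zero, sub_self, abs_zero, Real.zero_rpow hβ.ne', mul_zero]
  · -- reflect: q t = p (2x - t)
    set q : ℝ → ℝ := fun t => p (2 * x - t) with hq
    have hqc : ContDiff ℝ (ℓ : ℕ∞) q := hp.comp (contDiff_const.sub contDiff_id)
    have hqd : ∀ (k : ℕ) (t : ℝ), iteratedDeriv k q t = (-1 : ℝ) ^ k * iteratedDeriv k p (2 * x - t) := by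
      intro k t
      have e1 : q = fun t => (fun z => p (2 * x + z)) (-t) := by
        funext t; simp [hq, sub_eq_add_neg]
      rw [e1, iteratedDeriv_comp_neg k (fun z => p (2 * x + z)) t,
        iteratedDeriv_comp_const_add]
      simp [sub_eq_add_neg, smul_eq_mul]
    have hqH : ∀ a b : ℝ,
        |iteratedDeriv ℓ q a - iteratedDeriv ℓ q b| ≤ L * |a - b| ^ (β - (ℓ : ℝ)) := by
      intro a b
      rw [hqd, hqd]
      have : |(-1:ℝ)^ℓ * iteratedDeriv ℓ p (2*x - a) - (-1:ℝ)^ℓ * iteratedDeriv ℓ p (2*x - b)|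
          = |iteratedDeriv ℓ p (2*x - a) - iteratedDeriv ℓ p (2*x - b)| := by
        rw [← mul_sub, abs_mul, abs_pow, abs_neg, abs_one, one_pow, one_mul]
      rw [this]
      have h2 := hHolder (2*x - a) (2*x - b)
      have : |2*x - a - (2*x - b)| = |a - b| := by rw [show 2*x - a - (2*x - b) = -(a - b) by ring, abs_neg]
      rwa [this] at h2
    have hmain := taylor_holder_lt ℓ β L hβℓ hL q hqc hqH x (2*x - y) (by linarith)
    have e2 : q (2*x - y) = p y := by simp [hq]
    have e3 : ∑ k ∈ Finset.range (ℓ + 1), iteratedDeriv k q x * (2*x - y - x) ^ k / (Nat.factorial k : ℝ)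
        = ∑ k ∈ Finset.range (ℓ + 1), iteratedDeriv k p x * (y - x) ^ k / (Nat.factorial k : ℝ) := by
      refine Finset.sum_congr rfl fun k _ => ?_
      rw [hqd, show (2*x - x : ℝ) = x by ring]
      have hpow : ((-1:ℝ)) ^ k * (2*x - y - x) ^ k = (y - x) ^ k := by
        rw [← mul_pow]; congr 1; ring
      linear_combination (iteratedDeriv k p x / (Nat.factorial k : ℝ)) * hpow
    have e4 : |2*x - y - x| = |y - x| := by
      rw [show (2*x - y - x : ℝ) = -(y - x) by ring, abs_neg]
    rw [e2, e3, e4] at hmain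
    exact hmain

/-- If `p` is a density in the Hölder class `Σ(β, L)` on `ℝ` and `K` is a valid kernel
of order `β` with `∫|u|^β |K(u)| du < ∞`, then the convolution bias satisfies
`‖p − p ⋆ K_h‖_∞ ≤ (L/⌊β⌋!) h^β ∫ |u|^β |K(u)| du`, where `K_h(x) = h⁻¹ K(x/h)`. -/
theorem kernel_convolution_bias_bound
    (β L : ℝ) (hβ : 0 < β) (hL : 0 < L)
    (p : ℝ → ℝ)
    (hp : ContDiff ℝ (Nat.floor β) p)
    (hpbdd : ∃ M : ℝ, ∀ x, |p x| ≤ M)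
    -- Hölder condition on the ⌊β⌋-th derivative
    (hHolder : ∀ x x' : ℝ,
      |iteratedDeriv (Nat.floor β) p x - iteratedDeriv (Nat.floor β) p x'| ≤
        L * |x - x'| ^ (β - (Nat.floor β : ℝ)))
    (K : ℝ → ℝ) (hKmeas : Measurable K) (hKint : Integrable K)
    -- valid kernel of order β
    (hKunit : (∫ u, K u) = 1)
    (hKmom_int : ∀ j : ℕ, 1 ≤ j → j ≤ Nat.floor β → Integrable (fun u => u ^ j * K u))
    (hKmom : ∀ j : ℕ, 1 ≤ j → j ≤ Nat.floor β → (∫ u, u ^ j * K u) = 0)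
    -- finite β-th absolute moment
    (hKβ : Integrable (fun u => |u| ^ β * |K u|))
    (h : ℝ) (hh : 0 < h) :
    ∀ x : ℝ,
      |p x - ∫ u, h⁻¹ * K (u / h) * p (x - u)| ≤
        (L / (Nat.factorial (Nat.floor β) : ℝ)) * h ^ β * ∫ u, |u| ^ β * |K u| := by
  intro x
  set ℓ := Nat.floor β with hℓdef
  have hℓβ : (ℓ : ℝ) ≤ β := Nat.floor_le hβ.le
  -- Taylor–Hölder bound
  have hTB : ∀ y : ℝ,
      |p y - ∑ k ∈ Finset.range (ℓ + 1), iteratedDeriv k p x * (y - x) ^ k / (Nat.factorial k : ℝ)|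
        ≤ L / (Nat.factorial ℓ : ℝ) * |y - x| ^ β :=
    fun y => taylor_holder ℓ β L hβ hℓβ hL.le p hp hHolder x y
  -- change of variables
  have hcv : (∫ u, h⁻¹ * K (u / h) * p (x - u)) = ∫ t, K t * p (x - h * t) := by
    have e : (fun u => h⁻¹ * K (u / h) * p (x - u))
        = fun u => h⁻¹ * ((fun t => K t * p (x - h * t)) (u / h)) := by
      funext u
      have : h * (u / h) = u := by field_simp
      simp only [this]
      ring
    rw [e, integral_const_mul, MeasureTheory.Measure.integral_comp_div (fun t => K t * p (x - h * t)) h,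
      abs_of_pos hh, smul_eq_mul, ← mul_assoc, inv_mul_cancel₀ hh.ne', one_mul]
  -- integrability of K t * p (x - h t)
  obtain ⟨M, hM⟩ := hpbdd
  have hpc : Continuous p := hp.continuous
  have hI2 : Integrable (fun t => K t * p (x - h * t)) := by
    have := hKint.bdd_mul (f := fun t => p (x - h * t)) (c := M)
      ((hpc.comp (by continuity)).aestronglyMeasurable)
      (Filter.Eventually.of_forall fun t => by simpa [Real.norm_eq_abs] using hM (x - h * t))
    simpa [mul_comm] using this
  -- the Taylor polynomial part
  set S : ℝ → ℝ := fun t => ∑ k ∈ Finset.range (ℓ + 1),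
    iteratedDeriv k p x * (x - h * t - x) ^ k / (Nat.factorial k : ℝ) with hSdef
  have hJ : ∀ k ≤ ℓ, Integrable (fun t => t ^ k * K t) := by
    intro k hk
    rcases Nat.eq_zero_or_pos k with rfl | hkpos
    · simpa using hKint
    · exact hKmom_int k hkpos hk
  have hKS_eq : (fun t => K t * S t) = fun t => ∑ k ∈ Finset.range (ℓ + 1),
      (iteratedDeriv k p x * (-h) ^ k / (Nat.factorial k : ℝ)) * (t ^ k * K t) := by
    funext t
    rw [hSdef, Finset.mul_sum]
    refine Finset.sum_congr rfl fun k _ => ?_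
    rw [show (x - h * t - x : ℝ) = (-h) * t by ring, mul_pow]
    ring
  have hKSint : Integrable (fun t => K t * S t) := by
    rw [hKS_eq]
    exact integrable_finset_sum _ fun k hk =>
      ((hJ k (Nat.lt_succ_iff.mp (Finset.mem_range.mp hk))).const_mul _)
  have hKSval : (∫ t, K t * S t) = p x := by
    rw [hKS_eq, integral_finset_sum _ fun k hk =>
      ((hJ k (Nat.lt_succ_iff.mp (Finset.mem_range.mp hk))).const_mul _)]
    have : ∀ k ∈ Finset.range (ℓ + 1),
        (∫ t, (iteratedDeriv k p x * (-h) ^ k / (Nat.factorial k : ℝ)) * (t ^ k * K t))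
          = (iteratedDeriv k p x * (-h) ^ k / (Nat.factorial k : ℝ)) * ∫ t, t ^ k * K t :=
      fun k _ => integral_const_mul _ _
    rw [Finset.sum_congr rfl this,
      Finset.sum_eq_single_of_mem 0 (Finset.mem_range.mpr (Nat.succ_pos ℓ))]
    · simp [hKunit]
    · intro k hk hk0
      rw [hKmom k (Nat.one_le_iff_ne_zero.mpr hk0) (Nat.lt_succ_iff.mp (Finset.mem_range.mp hk))]
      ring
  -- rewrite the bias as an integral of the remainder
  have hbias : p x - ∫ t, K t * p (x - h * t) = ∫ t, K t * (S t - p (x - h * t)) := by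
    have e : (fun t => K t * (S t - p (x - h * t)))
        = fun t => K t * S t - K t * p (x - h * t) := by
      funext t; ring
    rw [e, integral_sub hKSint hI2, hKSval]
  -- pointwise bound on the remainder integrand
  have hb : ∀ t : ℝ, |K t * (S t - p (x - h * t))|
      ≤ (L / (Nat.factorial ℓ : ℝ) * h ^ β) * (|t| ^ β * |K t|) := by
    intro t
    have h1 : |S t - p (x - h * t)| ≤ L / (Nat.factorial ℓ : ℝ) * |x - h * t - x| ^ β := by
      have := hTB (x - h * t)
      rwa [abs_sub_comm] at this
    have h2 : |x - h * t - x| ^ β = h ^ β * |t| ^ β := by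
      rw [show (x - h * t - x : ℝ) = -(h * t) by ring, abs_neg, abs_mul, abs_of_pos hh,
        Real.mul_rpow hh.le (abs_nonneg t)]
    rw [abs_mul]
    calc |K t| * |S t - p (x - h * t)|
        ≤ |K t| * (L / (Nat.factorial ℓ : ℝ) * (h ^ β * |t| ^ β)) := by
          refine mul_le_mul_of_nonneg_left ?_ (abs_nonneg _)
          rw [← h2]; exact h1
      _ = (L / (Nat.factorial ℓ : ℝ) * h ^ β) * (|t| ^ β * |K t|) := by ring
  -- put it together
  have hKRint : Integrable (fun t => K t * (S t - p (x - h * t))) := by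
    have e : (fun t => K t * (S t - p (x - h * t)))
        = fun t => K t * S t - K t * p (x - h * t) := by
      funext t; ring
    rw [e]; exact hKSint.sub hI2
  rw [hcv, hbias]
  calc |∫ t, K t * (S t - p (x - h * t))|
      ≤ ∫ t, |K t * (S t - p (x - h * t))| := by
        simpa only [Real.norm_eq_abs] using
          norm_integral_le_integral_norm (μ := volume) (fun t => K t * (S t - p (x - h * t)))
    _ ≤ ∫ t, (L / (Nat.factorial ℓ : ℝ) * h ^ β) * (|t| ^ β * |K t|) := by
        exact integral_mono hKRint.abs (hKβ.const_mul _) hb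
    _ = (L / (Nat.factorial ℓ : ℝ)) * h ^ β * ∫ u, |u| ^ β * |K u| := by
        rw [integral_const_mul]
end
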